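/- Let E be any directed graph. Then each vertex of E connects to a sink, connects to a vertex on an extreme cycle, connects to a vertex on a cycle without exits, or lies on an infinite path containing a sequence of vertices v₀ > v₁ > v₂ > … (i.e., vᵢ ≥ vᵢ₊₁ and not vᵢ₊₁ ≥ vᵢ for all i). -/

import Mathlib

/-- A directed graph: vertices, edges, source and range maps. -/
structure DGraph where
  V : Type
  Ed : Type
  s : Ed → V
  r : Ed → V

namespace DGraph

variable (E : DGraph)

/-- One-step adjacency: there is an edge from `u` to `v`. -/
def Adj (u v : E.V) : Prop := ∃ e, E.s e = u ∧ E.r e = v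

/-- `u ≥ v`: there is a (finite) path from `u` to `v`. -/
def Reaches (u v : E.V) : Prop := Relation.ReflTransGen E.Adj u v

/-- The tree `T(W)` of a set of vertices. -/
def tree (W : Set E.V) : Set E.V := {u | ∃ v ∈ W, E.Reaches v u}

/-- The root `R(W)` of a set of vertices. -/
def root (W : Set E.V) : Set E.V := {u | ∃ v ∈ W, E.Reaches u v}

/-- The set of edges emitted by `v`. -/
def emits (v : E.V) : Set E.Ed := {e | E.s e = v}

/-- A sink emits no edges. -/
def IsSink (v : E.V) : Prop := E.emits v = ∅

/-- An infinite emitter emits infinitely many edges. -/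
def IsInfEmitter (v : E.V) : Prop := (E.emits v).Infinite

/-- A regular vertex is neither a sink nor an infinite emitter. -/
def IsRegular (v : E.V) : Prop := (E.emits v).Nonempty ∧ (E.emits v).Finite

/-- A hereditary set of vertices: `T(H) ⊆ H`. -/
def Hereditary (H : Set E.V) : Prop := ∀ u ∈ H, ∀ v, E.Reaches u v → v ∈ H

/-- A saturated set of vertices. -/
def Saturated (H : Set E.V) : Prop :=
  ∀ v, E.IsRegular v → (∀ e ∈ E.emits v, E.r e ∈ H) → v ∈ H

/-- The saturated closure of `W`: the smallest hereditary and saturated set containing `W`. -/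
def satClosure (W : Set E.V) : Set E.V :=
  ⋂₀ {H : Set E.V | E.Hereditary H ∧ E.Saturated H ∧ W ⊆ H}

/-- `es` is a finite walk (path) starting at `u`; `es = []` is the trivial path at `u`. -/
def IsWalkFrom (u : E.V) (es : List E.Ed) : Prop :=
  es.Chain' (fun e f => E.r e = E.s f) ∧ ∀ e ∈ es.head?, E.s e = u

/-- The terminal vertex (range) of the walk `es` starting at `u`. -/
def endVert (u : E.V) (es : List E.Ed) : E.V := es.getLast?.elim u E.r

/-- The set of vertices on the walk `es` starting at `u`. -/
def walkVerts (u : E.V) (es : List E.Ed) : Set E.V :=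
  insert u {v | ∃ e ∈ es, E.r e = v}

/-- An infinite path. -/
def IsInfPath (f : ℕ → E.Ed) : Prop := ∀ n, E.r (f n) = E.s (f (n + 1))

/-- The set of vertices on an infinite path. -/
def infVerts (f : ℕ → E.Ed) : Set E.V := Set.range fun n => E.s (f n)

/-- Elements of `E^{≤∞}`: finite walks or infinite paths. -/
inductive GPath (E : DGraph) : Type where
  | fin : E.V → List E.Ed → GPath E
  | inf : (ℕ → E.Ed) → GPath E

/-- Membership in `E^{≤∞}`: a well-formed finite path ending in a sink or an infinite
emitter, or an infinite path. -/
def gmem : GPath E → Prop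
  | .fin u es => E.IsWalkFrom u es ∧
      (E.IsSink (E.endVert u es) ∨ E.IsInfEmitter (E.endVert u es))
  | .inf f => E.IsInfPath f

/-- `p⁰`, the vertex set of an element of `E^{≤∞}`. -/
def gverts : GPath E → Set E.V
  | .fin u es => E.walkVerts u es
  | .inf f => E.infVerts f

/-- The graph `E` is cofinal. -/
def Cofinal : Prop :=
  ∀ v : E.V, ∀ p : GPath E, E.gmem p → ∃ w ∈ E.gverts p, E.Reaches v w

/-- `es` is a cycle based at `u`. -/
def IsCycle (u : E.V) (es : List E.Ed) : Prop :=
  es ≠ [] ∧ E.IsWalkFrom u es ∧ E.endVert u es = u ∧ (es.map E.s).Nodup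

/-- The cycle `es` (based at `u`) has an exit. -/
def HasExit (u : E.V) (es : List E.Ed) : Prop :=
  ∃ v ∈ E.walkVerts u es, ∃ e, E.s e = v ∧ e ∉ es

/-- An extreme cycle: a cycle with an exit such that `T(c⁰) ⊆ R(c⁰)`. -/
def IsExtremeCycle (u : E.V) (es : List E.Ed) : Prop :=
  E.IsCycle u es ∧ E.HasExit u es ∧
    E.tree (E.walkVerts u es) ⊆ E.root (E.walkVerts u es)

/-- `v` lies on some cycle. -/
def OnCycle (v : E.V) : Prop := ∃ u es, E.IsCycle u es ∧ v ∈ E.walkVerts u es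

/-- A terminal (infinite) path. -/
def IsTerminalPath (f : ℕ → E.Ed) : Prop :=
  E.IsInfPath f ∧
  (∀ v ∈ E.tree (E.infVerts f), ¬ E.IsInfEmitter v ∧ ¬ E.OnCycle v) ∧
  (∀ g : ℕ → E.Ed, E.IsInfPath g → E.s (g 0) ∈ E.infVerts f →
      E.tree (E.infVerts g) ⊆ E.root (E.infVerts g))

/-- A terminal vertex: a sink, a vertex on a cycle without exits, a vertex on an
extreme cycle, or a vertex on a terminal path. -/
def IsTerminalVert (v : E.V) : Prop :=
  E.IsSink v ∨
  (∃ u es, E.IsCycle u es ∧ ¬ E.HasExit u es ∧ v ∈ E.walkVerts u es) ∨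
  (∃ u es, E.IsExtremeCycle u es ∧ v ∈ E.walkVerts u es) ∨
  (∃ f, E.IsTerminalPath f ∧ v ∈ E.infVerts f)

/-- `p ∼ q` for elements of `E^{≤∞}`: `R(p⁰) = R(q⁰)`. -/
def pequiv (p q : GPath E) : Prop := E.root (E.gverts p) = E.root (E.gverts q)

/-- `v ≈ w` for terminal vertices. -/
def approx (v w : E.V) : Prop :=
  E.IsTerminalVert v ∧ E.IsTerminalVert w ∧
  ∃ p q : GPath E, E.gmem p ∧ E.gmem q ∧ v ∈ E.gverts p ∧ w ∈ E.gverts q ∧ E.pequiv p q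

/-- The cluster of a terminal vertex `v`: its `≈`-equivalence class. -/
def cluster (v : E.V) : Set E.V := {w | E.approx v w}

/-- `C` is a cluster of `E`. -/
def IsCluster (C : Set E.V) : Prop := ∃ v, E.IsTerminalVert v ∧ C = E.cluster v

/-- `Ter(E)`: the saturated closure of the set of terminal vertices. -/
def Ter : Set E.V := E.satClosure {v | E.IsTerminalVert v}

/-- The set `B_H` of breaking vertices of a (hereditary and saturated) set `H`. -/
def breaking (H : Set E.V) : Set E.V :=
  {v | v ∉ H ∧ E.IsInfEmitter v ∧
    {e | E.s e = v ∧ E.r e ∉ H}.Nonempty ∧ {e | E.s e = v ∧ E.r e ∉ H}.Finite}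

/-- `(H, S)` is an admissible pair. -/
def Admissible (H S : Set E.V) : Prop :=
  E.Hereditary H ∧ E.Saturated H ∧ S ⊆ E.breaking H

end DGraph
namespace DGraph

variable (E : DGraph)

lemma isWalkFrom_nil (u : E.V) : E.IsWalkFrom u [] :=
  ⟨List.isChain_nil, by simp⟩

lemma isWalkFrom_cons {u : E.V} {e : E.Ed} {es : List E.Ed} :
    E.IsWalkFrom u (e :: es) ↔ E.s e = u ∧ E.IsWalkFrom (E.r e) es := by
  constructor
  · rintro ⟨hc, hh⟩
    replace hc := List.isChain_cons.1 hc
    exact ⟨hh e rfl, hc.2, fun f hf => (hc.1 f hf).symm⟩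
  · rintro ⟨hs, hc, hh⟩
    refine ⟨List.isChain_cons.2 ⟨fun f hf => (hh f hf).symm, hc⟩, ?_⟩
    intro f hf; simp at hf; subst hf; exact hs

lemma endVert_nil (u : E.V) : E.endVert u [] = u := rfl

lemma endVert_cons (u : E.V) (e : E.Ed) (es : List E.Ed) :
    E.endVert u (e :: es) = E.endVert (E.r e) es := by
  cases es with
  | nil => simp [endVert]
  | cons f t =>
    show (e :: f :: t).getLast?.elim u E.r = _
    rw [List.getLast?_cons_cons]
    show _ = (f :: t).getLast?.elim (E.r e) E.r
    rw [List.getLast?_eq_getLast (l := f :: t) (by simp)]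
    rfl

lemma reaches_endVert {u : E.V} {es : List E.Ed} (h : E.IsWalkFrom u es) :
    E.Reaches u (E.endVert u es) := by
  induction es generalizing u with
  | nil => exact Relation.ReflTransGen.refl
  | cons e t ih =>
    rw [isWalkFrom_cons] at h
    rw [endVert_cons]
    exact Relation.ReflTransGen.head ⟨e, h.1, rfl⟩ (ih h.2)

lemma walkVerts_cons (u : E.V) (e : E.Ed) (es : List E.Ed) :
    E.walkVerts u (e :: es) = insert u (E.walkVerts (E.r e) es) := by
  ext x
  simp [walkVerts]
  tauto

lemma mem_walkVerts_self (u : E.V) (es : List E.Ed) : u ∈ E.walkVerts u es :=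
  Set.mem_insert _ _

lemma reaches_of_mem_walkVerts {u x : E.V} {es : List E.Ed}
    (h : E.IsWalkFrom u es) (hx : x ∈ E.walkVerts u es) : E.Reaches u x := by
  induction es generalizing u with
  | nil =>
    rcases hx with h' | h'
    · exact h' ▸ Relation.ReflTransGen.refl
    · simp at h'
  | cons e t ih =>
    rw [isWalkFrom_cons] at h
    rw [walkVerts_cons] at hx
    rcases hx with h' | h'
    · exact h' ▸ Relation.ReflTransGen.refl
    · exact Relation.ReflTransGen.head ⟨e, h.1, rfl⟩ (ih h.2 h')

lemma mem_walkVerts_reaches_endVert {u x : E.V} {es : List E.Ed}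
    (h : E.IsWalkFrom u es) (hx : x ∈ E.walkVerts u es) :
    x = u ∨ E.Reaches x (E.endVert u es) := by
  induction es generalizing u with
  | nil =>
    rcases hx with h' | h'
    · exact Or.inl h'
    · simp at h'
  | cons e t ih =>
    rw [isWalkFrom_cons] at h
    rw [walkVerts_cons] at hx
    rw [endVert_cons]
    rcases hx with h' | h'
    · exact Or.inl h'
    · rcases ih h.2 h' with h'' | h''
      · exact Or.inr (by rw [h'']; exact reaches_endVert E h.2)
      · exact Or.inr h''

lemma isWalkFrom_take {u : E.V} {es : List E.Ed} (h : E.IsWalkFrom u es) (i : ℕ) :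
    E.IsWalkFrom u (es.take i) := by
  induction es generalizing u i with
  | nil => simpa using h
  | cons e t ih =>
    cases i with
    | zero => exact isWalkFrom_nil E u
    | succ i =>
      rw [isWalkFrom_cons] at h
      rw [List.take_succ_cons, isWalkFrom_cons]
      exact ⟨h.1, ih h.2 i⟩

lemma isWalkFrom_drop {u : E.V} {es : List E.Ed} (h : E.IsWalkFrom u es) (i : ℕ) :
    E.IsWalkFrom (E.endVert u (es.take i)) (es.drop i) := by
  induction i generalizing u es with
  | zero => simpa [endVert_nil] using h
  | succ i ih =>
    cases es with
    | nil => exact isWalkFrom_nil E _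
    | cons e t =>
      rw [isWalkFrom_cons] at h
      rw [List.take_succ_cons, List.drop_succ_cons, endVert_cons]
      exact ih h.2

lemma endVert_take {u : E.V} {es : List E.Ed} (h : E.IsWalkFrom u es) (i : ℕ)
    (hi : i < es.length) : E.endVert u (es.take i) = E.s (es.get ⟨i, hi⟩) := by
  induction i generalizing u es with
  | zero =>
    cases es with
    | nil => simp at hi
    | cons e t =>
      rw [isWalkFrom_cons] at h
      simp [endVert_nil, h.1]
  | succ i ih =>
    cases es with
    | nil => simp at hi
    | cons e t =>
      rw [isWalkFrom_cons] at h
      rw [List.take_succ_cons, endVert_cons]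
      exact ih h.2 (by simpa using hi)

lemma endVert_eq_r_getLast {u : E.V} {es : List E.Ed} (h : es ≠ []) :
    E.endVert u es = E.r (es.getLast h) := by
  simp [endVert, List.getLast?_eq_getLast h]

end DGraph
lemma aux_get_congr {α : Type _} (l : List α) (a b : ℕ) (ha : a < l.length)
    (h : a = b) (hb : b < l.length) : l.get ⟨a, ha⟩ = l.get ⟨b, hb⟩ := by
  subst h; rfl

lemma aux_get_congr' {α : Type _} {l l' : List α} (h : l = l') (a b : ℕ)
    (ha : a < l.length) (h2 : a = b) (hb : b < l'.length) :
    l.get ⟨a, ha⟩ = l'.get ⟨b, hb⟩ := by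
  subst h; subst h2; rfl

namespace DGraph
variable (E : DGraph)

lemma endVert_eq_r_get {u : E.V} {es : List E.Ed} (hne : es ≠ []) :
    E.endVert u es = E.r (es.get ⟨es.length - 1, by
      have := List.length_pos_iff.2 hne; omega⟩) := by
  rw [endVert_eq_r_getLast E hne]
  congr 1
  rw [List.getLast_eq_getElem]
  rfl

lemma walk_start {u : E.V} {es : List E.Ed} (h : E.IsWalkFrom u es) (hne : es ≠ []) :
    E.s (es.get ⟨0, List.length_pos_iff.2 hne⟩) = u := by
  cases es with
  | nil => exact absurd rfl hne
  | cons a t => exact h.2 a rfl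

end DGraph
namespace DGraph
variable (E : DGraph)

lemma walk_of_reaches {u w : E.V} (h : E.Reaches u w) :
    ∃ es, E.IsWalkFrom u es ∧ E.endVert u es = w := by
  induction h using Relation.ReflTransGen.head_induction_on with
  | refl => exact ⟨[], isWalkFrom_nil E _, rfl⟩
  | head hab _ ih =>
    obtain ⟨e, hs, hr⟩ := hab
    obtain ⟨es, hw, he⟩ := ih
    refine ⟨e :: es, (isWalkFrom_cons E).2 ⟨hs, by rw [hr]; exact hw⟩, ?_⟩
    rw [endVert_cons, hr]; exact he

lemma exists_cycle_of_closed_walk {u u₀ : E.V} {es₀ : List E.Ed}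
    (h0 : E.Reaches u u₀) (hw0 : E.IsWalkFrom u₀ es₀) (hne0 : es₀ ≠ [])
    (hc0 : E.endVert u₀ es₀ = u₀) :
    ∃ u' es, E.Reaches u u' ∧ E.IsCycle u' es := by
  classical
  set P : ℕ → Prop := fun n => ∃ u' es, E.Reaches u u' ∧ E.IsWalkFrom u' es ∧
    es ≠ [] ∧ E.endVert u' es = u' ∧ es.length = n with hP
  have hex : ∃ n, P n := ⟨es₀.length, u₀, es₀, h0, hw0, hne0, hc0, rfl⟩
  obtain ⟨u', es, hu', hw, hne, hcl, hlen⟩ := Nat.find_spec hex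
  refine ⟨u', es, hu', hne, hw, hcl, ?_⟩
  by_contra hnd
  have hninj : ¬ Function.Injective (es.map E.s).get :=
    fun hinj => hnd (List.nodup_iff_injective_get.2 hinj)
  obtain ⟨i, j, hg, hij⟩ := Function.not_injective_iff.1 hninj
  have hi : i.val < es.length := by simpa using i.isLt
  have hj : j.val < es.length := by simpa using j.isLt
  have hgs : E.s (es.get ⟨i.val, hi⟩) = E.s (es.get ⟨j.val, hj⟩) := by
    simpa [List.getElem_map] using hg
  have key : ∀ a b : ℕ, ∀ (ha : a < es.length) (hb : b < es.length), a < b →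
      E.s (es.get ⟨a, ha⟩) = E.s (es.get ⟨b, hb⟩) → False := by
    intro a b ha hb hab heq
    set w'' := E.s (es.get ⟨a, ha⟩) with hw''
    have hdropwalk : E.IsWalkFrom w'' (es.drop a) := by
      have := isWalkFrom_drop E hw a
      rwa [endVert_take E hw a ha] at this
    have htw : E.IsWalkFrom w'' ((es.drop a).take (b - a)) :=
      isWalkFrom_take E hdropwalk (b - a)
    have hlt : b - a < (es.drop a).length := by
      rw [List.length_drop]; omega
    have hend : E.endVert w'' ((es.drop a).take (b - a)) = w'' := by
      rw [endVert_take E hdropwalk (b - a) hlt]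
      have : (es.drop a).get ⟨b - a, hlt⟩ = es.get ⟨b, hb⟩ := by
        simp [List.getElem_drop]
        congr 1
        omega
      rw [this, ← heq]
    have hreach : E.Reaches u w'' := by
      refine hu'.trans ?_
      have := reaches_endVert E (isWalkFrom_take E hw a)
      rwa [endVert_take E hw a ha] at this
    have hlen'' : ((es.drop a).take (b - a)).length = b - a := by
      rw [List.length_take, List.length_drop]; omega
    have hba : b - a < Nat.find hex := by omega
    exact Nat.find_min hex hba ⟨w'', (es.drop a).take (b - a), hreach, htw,
      by intro h; rw [h] at hlen''; simp at hlen''; omega, hend, hlen''⟩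
  rcases lt_trichotomy i.val j.val with h | h | h
  · exact key i.val j.val hi hj h hgs
  · exact hij (Fin.ext h)
  · exact key j.val i.val hj hi h hgs.symm

lemma exists_escape (v : E.V)
    (h1 : ¬ ∃ w, E.Reaches v w ∧ E.IsSink w)
    (h2 : ¬ ∃ w, E.Reaches v w ∧ ∃ u es, E.IsExtremeCycle u es ∧ w ∈ E.walkVerts u es)
    (h3 : ¬ ∃ w, E.Reaches v w ∧
      ∃ u es, E.IsCycle u es ∧ ¬ E.HasExit u es ∧ w ∈ E.walkVerts u es)
    {u : E.V} (hu : E.Reaches v u) :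
    ∃ es, E.IsWalkFrom u es ∧ es ≠ [] ∧ ¬ E.Reaches (E.endVert u es) u := by
  by_contra hcon
  push_neg at hcon
  have hall : ∀ t, E.Reaches u t → E.Reaches t u := by
    intro t ht
    obtain ⟨es, hw, he⟩ := walk_of_reaches E ht
    rcases eq_or_ne es [] with rfl | hne
    · cases he; exact Relation.ReflTransGen.refl
    · exact he ▸ hcon es hw hne
  have hns : ¬ E.IsSink u := fun hs => h1 ⟨u, hu, hs⟩
  obtain ⟨e, he⟩ := Set.nonempty_iff_ne_empty.2 hns
  have hre : E.Reaches u (E.r e) := Relation.ReflTransGen.single ⟨e, he, rfl⟩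
  obtain ⟨es₁, hw₁, he₁⟩ := walk_of_reaches E (hall _ hre)
  have hwc : E.IsWalkFrom u (e :: es₁) := (isWalkFrom_cons E).2 ⟨he, hw₁⟩
  have hcc : E.endVert u (e :: es₁) = u := by rw [endVert_cons]; exact he₁
  obtain ⟨u', es, hr', hcy⟩ :=
    exists_cycle_of_closed_walk E (Relation.ReflTransGen.refl (a := u)) hwc (by simp) hcc
  have htr : E.tree (E.walkVerts u' es) ⊆ E.root (E.walkVerts u' es) := by
    rintro t ⟨x, hx, hxt⟩
    have hux : E.Reaches u x := hr'.trans (reaches_of_mem_walkVerts E hcy.2.1 hx)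
    exact ⟨u', mem_walkVerts_self E u' es, (hall t (hux.trans hxt)).trans hr'⟩
  by_cases hexi : E.HasExit u' es
  · exact h2 ⟨u', hu.trans hr', u', es, ⟨hcy, hexi, htr⟩, mem_walkVerts_self E u' es⟩
  · exact h3 ⟨u', hu.trans hr', u', es, hcy, hexi, mem_walkVerts_self E u' es⟩

end DGraph
/-- Proposition: each vertex of a graph connects to a sink, to a
vertex on an extreme cycle, to a vertex on a cycle without exits, or lies on an
infinite path containing vertices `v₀ > v₁ > v₂ > …`. -/
theorem every_vertex_connects_to_terminal (E : DGraph) (v : E.V) :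
    (∃ w, E.Reaches v w ∧ E.IsSink w) ∨
    (∃ w, E.Reaches v w ∧ ∃ u es, E.IsExtremeCycle u es ∧ w ∈ E.walkVerts u es) ∨
    (∃ w, E.Reaches v w ∧
      ∃ u es, E.IsCycle u es ∧ ¬ E.HasExit u es ∧ w ∈ E.walkVerts u es) ∨
    (∃ f : ℕ → E.Ed, E.IsInfPath f ∧ v ∈ E.infVerts f ∧
      ∃ w : ℕ → E.V, (∀ i, w i ∈ E.infVerts f) ∧
        ∀ i, E.Reaches (w i) (w (i + 1)) ∧ ¬ E.Reaches (w (i + 1)) (w i)) := by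
  classical
  by_cases h1 : ∃ w, E.Reaches v w ∧ E.IsSink w
  · exact Or.inl h1
  by_cases h2 : ∃ w, E.Reaches v w ∧ ∃ u es, E.IsExtremeCycle u es ∧ w ∈ E.walkVerts u es
  · exact Or.inr (Or.inl h2)
  by_cases h3 : ∃ w, E.Reaches v w ∧
      ∃ u es, E.IsCycle u es ∧ ¬ E.HasExit u es ∧ w ∈ E.walkVerts u es
  · exact Or.inr (Or.inr (Or.inl h3))
  refine Or.inr (Or.inr (Or.inr ?_))
  have claim := fun (u : E.V) (hu : E.Reaches v u) => E.exists_escape v h1 h2 h3 hu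
  choose pick hpw hpne hpback using claim
  let U : ℕ → {x : E.V // E.Reaches v x} := fun n => Nat.rec
    ⟨v, Relation.ReflTransGen.refl⟩
    (fun _ p => ⟨E.endVert p.1 (pick p.1 p.2),
      p.2.trans (E.reaches_endVert (hpw p.1 p.2))⟩) n
  let q : ℕ → List E.Ed := fun i => pick (U i).1 (U i).2
  have hUsucc : ∀ i, (U (i + 1)).1 = E.endVert (U i).1 (q i) := fun i => rfl
  have hqw : ∀ i, E.IsWalkFrom (U i).1 (q i) := fun i => hpw _ _
  have hqne : ∀ i, q i ≠ [] := fun i => hpne _ _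
  have hqback : ∀ i, ¬ E.Reaches (U (i + 1)).1 (U i).1 := fun i => by
    have := hpback (U i).1 (U i).2
    rwa [← hUsucc i] at this
  have hqlen : ∀ i, 0 < (q i).length := fun i => List.length_pos_iff.2 (hqne i)
  let N : ℕ → ℕ := fun n => Nat.rec 0 (fun i m => m + (q i).length) n
  have hN0 : N 0 = 0 := rfl
  have hNsucc : ∀ i, N (i + 1) = N i + (q i).length := fun i => rfl
  have hNmono : StrictMono N := strictMono_nat_of_lt_succ (fun i => by
    rw [hNsucc]; have := hqlen i; omega)
  have hidx : ∀ n : ℕ, ∃ i, n < N (i + 1) := fun n =>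
    ⟨n, lt_of_lt_of_le (Nat.lt_succ_self n) (hNmono.le_apply)⟩
  let idx : ℕ → ℕ := fun n => Nat.find (hidx n)
  have hidx1 : ∀ n, n < N (idx n + 1) := fun n => Nat.find_spec (hidx n)
  have hidx2 : ∀ n, N (idx n) ≤ n := by
    intro n
    rcases Nat.eq_zero_or_pos (idx n) with h | h
    · rw [h, hN0]; exact Nat.zero_le n
    · have := Nat.find_min (hidx n) (show idx n - 1 < idx n by omega)
      push_neg at this
      have heq : idx n - 1 + 1 = idx n := by omega
      rwa [heq] at this
  have idx_eq : ∀ n i, N i ≤ n → n < N (i + 1) → idx n = i := by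
    intro n i hle hlt
    by_contra hne
    rcases lt_or_gt_of_ne hne with h | h
    · have : N (idx n + 1) ≤ N i := hNmono.monotone h
      exact absurd (hidx1 n) (by omega)
    · have : N (i + 1) ≤ N (idx n) := hNmono.monotone h
      have := hidx2 n
      omega
  let e₀ : E.Ed := (q 0).head (hqne 0)
  let f : ℕ → E.Ed := fun n => (q (idx n)).getD (n - N (idx n)) e₀
  have hk : ∀ n, n - N (idx n) < (q (idx n)).length := by
    intro n
    have h1' := hidx1 n
    have h2' := hidx2 n
    rw [hNsucc] at h1'
    omega
  have f_eq : ∀ n, f n = (q (idx n)).get ⟨n - N (idx n), hk n⟩ := by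
    intro n
    show (q (idx n)).getD (n - N (idx n)) e₀ = _
    rw [List.getD_eq_getElem _ _ (hk n)]
    rfl
  have hfN : ∀ i, f (N i) = (q i).get ⟨0, hqlen i⟩ := by
    intro i
    have hix : idx (N i) = i := idx_eq (N i) i le_rfl
      (by rw [hNsucc]; have := hqlen i; omega)
    show (q (idx (N i))).getD (N i - N (idx (N i))) e₀ = _
    rw [hix, Nat.sub_self, List.getD_eq_getElem _ _ (hqlen i)]
    rfl
  have hshead : ∀ i, E.s ((q i).get ⟨0, hqlen i⟩) = (U i).1 := fun i =>
    E.walk_start (hqw i) (hqne i)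
  have hinf : E.IsInfPath f := by
    intro n
    have hle := hidx2 n
    have hlt := hidx1 n
    rw [hNsucc] at hlt
    rcases lt_or_eq_of_le (show n - N (idx n) + 1 ≤ (q (idx n)).length by omega)
      with hcase | hcase
    · have hix' : idx (n + 1) = idx n := idx_eq (n + 1) (idx n) (by omega)
        (by rw [hNsucc]; omega)
      rw [f_eq n, f_eq (n + 1),
        aux_get_congr' (show q (idx (n + 1)) = q (idx n) by rw [hix'])
          ((n + 1) - N (idx (n + 1))) (n - N (idx n) + 1) (hk (n + 1))
          (by rw [hix']; omega) (by omega)]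
      exact List.isChain_iff_getElem.1 (hqw (idx n)).1 (n - N (idx n)) (by omega)
    · have hn1 : n + 1 = N (idx n + 1) := by rw [hNsucc]; omega
      rw [f_eq n, hn1, hfN (idx n + 1), hshead (idx n + 1), hUsucc (idx n),
        DGraph.endVert_eq_r_get E (hqne (idx n))]
      exact congrArg E.r (aux_get_congr _ _ _ _ (by omega) _)
  refine ⟨f, hinf, ?_, fun i => (U i).1, ?_, ?_⟩
  · refine ⟨0, ?_⟩
    show E.s (f 0) = v
    have h0 : (0 : ℕ) = N 0 := hN0.symm
    rw [h0, hfN 0, hshead 0]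
    rfl
  · intro i
    refine ⟨N i, ?_⟩
    show E.s (f (N i)) = (U i).1
    rw [hfN i, hshead i]
  · intro i
    refine ⟨?_, hqback i⟩
    show E.Reaches (U i).1 (U (i + 1)).1
    rw [hUsucc i]
    exact E.reaches_endVert (hqw i)
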